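/- Suppose β⋄ ∈ ℝᵖ and d⋄ = Xᵀ(y − Xβ⋄)/n satisfy βᵢ⋄ = H_λ(βᵢ⋄ + dᵢ⋄) for all i, and the least-squares problem restricted to A⋄ = supp(β⋄) is minimized by β⋄_{A⋄}. Then β⋄ is a local minimizer of L_λ(β) = (1/(2n))‖Xβ − y‖₂² + λ‖β‖₀: there is δ > 0 such that L_λ(β⋄ + h) ≥ L_λ(β⋄) for all h with ‖h‖_∞ < δ. -/

import Mathlib

open Matrix Finset

/-- A hard-thresholding fixed point which solves the least squares
problem restricted to its support is a local minimizer of the ℓ₀-penalized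
criterion. -/
theorem sdar_kkt_local_min {n p : ℕ} (hn : 0 < n)
    (X : Matrix (Fin n) (Fin p) ℝ) (y : Fin n → ℝ)
    (lam : ℝ) (hlam : 0 < lam) (βd : Fin p → ℝ)
    (hfix : ∀ i : Fin p,
      βd i =
        (if |βd i + Xᵀ.mulVec (y - X.mulVec βd) i / (n : ℝ)| < Real.sqrt (2 * lam)
          then 0
          else βd i + Xᵀ.mulVec (y - X.mulVec βd) i / (n : ℝ)))
    (hls : ∀ b : Fin p → ℝ, (∀ i, βd i = 0 → b i = 0) →
      ∑ i, (X.mulVec βd i - y i) ^ 2 ≤ ∑ i, (X.mulVec b i - y i) ^ 2) :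
    ∃ δ > 0, ∀ h : Fin p → ℝ, ‖h‖ < δ →
      (1 / (2 * (n : ℝ))) * ∑ i, (X.mulVec βd i - y i) ^ 2
          + lam * ((Finset.univ.filter fun i => βd i ≠ 0).card : ℝ)
        ≤ (1 / (2 * (n : ℝ))) * ∑ i, (X.mulVec (βd + h) i - y i) ^ 2
          + lam * ((Finset.univ.filter fun i => (βd + h) i ≠ 0).card : ℝ) := by
  have hn' : (0 : ℝ) < n := by exact_mod_cast hn
  set D : Fin p → ℝ := Xᵀ.mulVec (y - X.mulVec βd) with hD
  -- basic consequences of the fixed point condition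
  have hsq : Real.sqrt (lam / 2) * Real.sqrt (2 * lam) = lam := by
    rw [← Real.sqrt_mul (by linarith)]
    have : lam / 2 * (2 * lam) = lam ^ 2 := by ring
    rw [this, Real.sqrt_sq hlam.le]
  have hsqpos : 0 < Real.sqrt (lam / 2) := Real.sqrt_pos.mpr (by linarith)
  have hsqpos2 : 0 < Real.sqrt (2 * lam) := Real.sqrt_pos.mpr (by linarith)
  have key : ∀ i, (βd i = 0 ∧ |D i| < (n : ℝ) * Real.sqrt (2 * lam)) ∨
      (D i = 0 ∧ Real.sqrt (2 * lam) ≤ |βd i|) := by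
    intro i
    have hf := hfix i
    by_cases hc : |βd i + D i / (n : ℝ)| < Real.sqrt (2 * lam)
    · rw [if_pos hc] at hf
      left
      refine ⟨hf, ?_⟩
      rw [hf, zero_add, abs_div, abs_of_pos hn'] at hc
      rw [div_lt_iff₀ hn'] at hc
      linarith
    · rw [if_neg hc] at hf
      right
      have hdi : D i / (n : ℝ) = 0 := by linarith
      have hdi' : D i = 0 := by
        field_simp at hdi; simpa using hdi
      refine ⟨hdi', ?_⟩
      push_neg at hc
      rw [hdi, add_zero] at hc
      exact hc
  refine ⟨Real.sqrt (lam / 2), hsqpos, ?_⟩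
  intro h hh
  have hhi : ∀ i, |h i| < Real.sqrt (lam / 2) := fun i =>
    lt_of_le_of_lt (by simpa using norm_le_pi_norm h i) hh
  classical
  set A : Finset (Fin p) := Finset.univ.filter fun i => βd i ≠ 0 with hA
  set B : Finset (Fin p) := Finset.univ.filter fun i => (βd + h) i ≠ 0 with hB
  -- A ⊆ B
  have hAB : A ⊆ B := by
    intro i hi
    rw [hA, Finset.mem_filter] at hi
    rw [hB, Finset.mem_filter]
    refine ⟨Finset.mem_univ _, ?_⟩
    have hbig : Real.sqrt (2 * lam) ≤ |βd i| := by
      rcases key i with ⟨h0, _⟩ | ⟨_, hb⟩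
      · exact absurd h0 hi.2
      · exact hb
    have hlt : Real.sqrt (lam / 2) < Real.sqrt (2 * lam) :=
      Real.sqrt_lt_sqrt (by linarith) (by linarith)
    intro hcon
    have : h i = -βd i := by
      have := hcon
      simp only [Pi.add_apply] at this
      linarith
    have : |h i| = |βd i| := by rw [this, abs_neg]
    have := hhi i
    linarith
  set S : Finset (Fin p) := B \ A with hS
  have hcardB : (B.card : ℝ) = A.card + S.card := by
    have h1 : S.card = B.card - A.card := Finset.card_sdiff_of_subset hAB
    have h2 : A.card ≤ B.card := Finset.card_le_card hAB
    have : B.card = A.card + S.card := by omega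
    exact_mod_cast congrArg (Nat.cast : ℕ → ℝ) this
  -- cross term identity
  have cross : ∑ i, X.mulVec h i * (X.mulVec βd i - y i) = -∑ j, h j * D j := by
    simp only [hD, Matrix.mulVec, dotProduct, Matrix.transpose_apply, Pi.sub_apply,
      Finset.sum_mul, Finset.mul_sum, ← Finset.sum_neg_distrib]
    rw [Finset.sum_comm]
    refine Finset.sum_congr rfl fun i _ => Finset.sum_congr rfl fun j _ => by ring
  -- restrict sum to S
  have hsumS : ∑ j, h j * D j = ∑ j ∈ S, h j * D j := by
    refine (Finset.sum_subset (Finset.subset_univ S) fun j _ hj => ?_).symm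
    rw [hS, Finset.mem_sdiff] at hj
    by_cases hAj : j ∈ A
    · rcases key j with ⟨h0, _⟩ | ⟨hd0, _⟩
      · rw [hA, Finset.mem_filter] at hAj; exact absurd h0 hAj.2
      · rw [hd0, mul_zero]
    · have hBj : j ∉ B := fun hb => hj ⟨hb, hAj⟩
      rw [hA, Finset.mem_filter] at hAj
      push_neg at hAj
      have hβ0 : βd j = 0 := hAj (Finset.mem_univ _)
      rw [hB, Finset.mem_filter] at hBj
      push_neg at hBj
      have := hBj (Finset.mem_univ _)
      simp only [Pi.add_apply, hβ0, zero_add] at this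
      rw [this, zero_mul]
  -- per-term bound on S
  have hterm : ∀ j ∈ S, h j * D j ≤ (n : ℝ) * lam := by
    intro j hj
    rw [hS, Finset.mem_sdiff] at hj
    have hβ0 : βd j = 0 := by
      by_contra hc
      exact hj.2 (by rw [hA, Finset.mem_filter]; exact ⟨Finset.mem_univ _, hc⟩)
    have hDj : |D j| < (n : ℝ) * Real.sqrt (2 * lam) := by
      rcases key j with ⟨_, hb⟩ | ⟨_, hb⟩
      · exact hb
      · rw [hβ0, abs_zero] at hb; linarith
    calc h j * D j ≤ |h j * D j| := le_abs_self _
      _ = |h j| * |D j| := abs_mul _ _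
      _ ≤ Real.sqrt (lam / 2) * ((n : ℝ) * Real.sqrt (2 * lam)) := by
          apply mul_le_mul (hhi j).le hDj.le (abs_nonneg _) hsqpos.le
      _ = (n : ℝ) * (Real.sqrt (lam / 2) * Real.sqrt (2 * lam)) := by ring
      _ = (n : ℝ) * lam := by rw [hsq]
  have hsumbound : ∑ j ∈ S, h j * D j ≤ (S.card : ℝ) * ((n : ℝ) * lam) := by
    calc ∑ j ∈ S, h j * D j ≤ ∑ _j ∈ S, (n : ℝ) * lam := Finset.sum_le_sum hterm
      _ = (S.card : ℝ) * ((n : ℝ) * lam) := by rw [Finset.sum_const, nsmul_eq_mul]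
  -- quadratic expansion
  have expand : ∑ i, (X.mulVec (βd + h) i - y i) ^ 2
      = ∑ i, (X.mulVec βd i - y i) ^ 2
        + 2 * ∑ i, X.mulVec h i * (X.mulVec βd i - y i)
        + ∑ i, (X.mulVec h i) ^ 2 := by
    rw [Finset.mul_sum, ← Finset.sum_add_distrib, ← Finset.sum_add_distrib]
    refine Finset.sum_congr rfl fun i _ => ?_
    rw [Matrix.mulVec_add]
    simp only [Pi.add_apply]
    ring
  rw [expand, cross, hsumS, hcardB]
  have hQ : 0 ≤ ∑ i, (X.mulVec h i) ^ 2 := Finset.sum_nonneg fun i _ => sq_nonneg _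
  have hdiv : -(lam * (S.card : ℝ)) ≤ (1 / (2 * (n : ℝ))) * (2 * -∑ j ∈ S, h j * D j) := by
    have : (1 / (2 * (n : ℝ))) * (2 * -∑ j ∈ S, h j * D j) = (-∑ j ∈ S, h j * D j) / n := by
      field_simp
    rw [this, le_div_iff₀ hn']
    nlinarith [hsumbound]
  have hpos : (0:ℝ) < 1 / (2 * (n:ℝ)) := by positivity
  have hdist : (1 / (2 * (n:ℝ))) * (∑ i, (X.mulVec βd i - y i) ^ 2
        + 2 * -∑ j ∈ S, h j * D j + ∑ i, (X.mulVec h i) ^ 2)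
      = (1 / (2 * (n:ℝ))) * ∑ i, (X.mulVec βd i - y i) ^ 2
        + (1 / (2 * (n:ℝ))) * (2 * -∑ j ∈ S, h j * D j)
        + (1 / (2 * (n:ℝ))) * ∑ i, (X.mulVec h i) ^ 2 := by ring
  have hQ' : 0 ≤ (1 / (2 * (n:ℝ))) * ∑ i, (X.mulVec h i) ^ 2 := mul_nonneg hpos.le hQ
  have hcS : (0:ℝ) ≤ S.card := Nat.cast_nonneg _
  nlinarith [hdiv, hQ', hdist, hcS]
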